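/- Vanishing of cumulants for non-good graphs in tensor PCA (Lemma 6.1): Fix integers r ≥ 2 and m ≥ 2, λ ≥ 0, and a probability distribution π on ℝ with mean 0 and all moments finite. Let θ ∈ ℝ^n have i.i.d. entries from π, set X = λ·θ^{⊗r} and x = ∏_{i=1}^m θ_i, and for each r-uniform multi-hypergraph α on [n] define the joint cumulant κ_α recursively by κ_α = E[x·X^α] − Σ_{0 ≤ β < α} binom(α,β)·E[X^{α−β}]·κ_β, where X^α = ∏_e X_e^{α_e}. Write ᾱ for the (non-uniform) multi-hypergraph obtained from α by adding the hyperedge {1,…,m}, and call α good if α = 0 or if ᾱ is connected and every vertex of ᾱ has degree at least 2. Then κ_α = 0 for every α that is not good. -/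

import Mathlib

open MeasureTheory

/-- An r-uniform multi-hypergraph on [n]: a multiplicity for each size-r multiset
of vertices. -/
abbrev MHG (n r : ℕ) := Sym (Fin n) r → ℕ

/-- The multiset of edges (each a multiset of vertices) of a multi-hypergraph,
with multiplicity. -/
def edgesOf {n r : ℕ} (α : MHG n r) : Multiset (Multiset (Fin n)) :=
  ∑ e : Sym (Fin n) r, Multiset.replicate (α e) (e : Multiset (Fin n))

/-- The extra hyperedge {1,…,m} (vertices of index < m). -/
def barEdge (n m : ℕ) : Multiset (Fin n) :=
  (Finset.univ.filter fun i : Fin n => (i : ℕ) < m).val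

/-- ᾱ: the multi-hypergraph α together with the added hyperedge {1,…,m}. -/
def barGraph {n r : ℕ} (m : ℕ) (α : MHG n r) : Multiset (Multiset (Fin n)) :=
  barEdge n m ::ₘ edgesOf α

/-- Degree of vertex i in a multiset of edges, counted with multiplicity
(an edge contributes the number of occurrences of i in it). -/
def degM {n : ℕ} (G : Multiset (Multiset (Fin n))) (i : Fin n) : ℕ :=
  (G.map fun e => e.count i).sum

/-- A (general, not necessarily uniform) multi-hypergraph given as a multiset of
edges is connected: every pair of non-isolated vertices is joined by a chain of
pairwise-intersecting edges of G. -/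
def MHConnected {n : ℕ} (G : Multiset (Multiset (Fin n))) : Prop :=
  ∀ u v : Fin n, (∃ e ∈ G, u ∈ e) → (∃ e ∈ G, v ∈ e) →
    ∃ (p : ℕ) (c : Fin (p + 1) → Multiset (Fin n)),
      (∀ j, c j ∈ G) ∧ u ∈ c 0 ∧ v ∈ c (Fin.last p) ∧
      ∀ j : Fin p, ∃ w : Fin n, w ∈ c j.castSucc ∧ w ∈ c j.succ

/-- α is good: α = 0, or ᾱ is connected and every non-isolated vertex of ᾱ has
degree at least 2 (with multiplicity). -/
def GoodMHG {n r : ℕ} (m : ℕ) (α : MHG n r) : Prop :=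
  α = 0 ∨ (MHConnected (barGraph m α) ∧
    ∀ i : Fin n, 0 < degM (barGraph m α) i → 2 ≤ degM (barGraph m α) i)

/-- Number of edges of α, counted with multiplicity. -/
def edgeCount {n r : ℕ} (α : MHG n r) : ℕ := ∑ e, α e

/-- Number of non-isolated vertices of α. -/
def vertexCount {n r : ℕ} (α : MHG n r) : ℕ :=
  (Finset.univ.filter fun i : Fin n => 0 < degM (edgesOf α) i).card

/-- binom(α,β) = ∏_e binom(α_e, β_e). -/
def mhgChoose {n r : ℕ} (α β : MHG n r) : ℕ := ∏ e, Nat.choose (α e) (β e)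

/-- X^α = ∏_e X_e^{α_e} as a function of θ, where X_e = λ·∏_{i∈e} θ_i
(with multiplicity). -/
noncomputable def XPow {n r : ℕ} (lam : ℝ) (θ : Fin n → ℝ) (α : MHG n r) : ℝ :=
  ∏ e : Sym (Fin n) r, (lam * ((e : Multiset (Fin n)).map θ).prod) ^ α e

/-- The estimand x = ∏_{i=1}^m θ_i. -/
def xEst {n : ℕ} (m : ℕ) (hmn : m ≤ n) (θ : Fin n → ℝ) : ℝ :=
  ∏ i : Fin m, θ (Fin.castLE hmn i)

section Aux

variable {n r : ℕ}

lemma degM_cons (a : Multiset (Fin n)) (G : Multiset (Multiset (Fin n))) (i : Fin n) :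
    degM (a ::ₘ G) i = a.count i + degM G i := by
  simp [degM]

lemma degM_sum {ι : Type*} (s : Finset ι) (f : ι → Multiset (Multiset (Fin n))) (i : Fin n) :
    degM (∑ j ∈ s, f j) i = ∑ j ∈ s, degM (f j) i := by
  classical
  induction s using Finset.induction with
  | empty => simp [degM]
  | insert _ _ hx ih => rw [Finset.sum_insert hx, Finset.sum_insert hx, ← ih]; simp [degM]

lemma degM_edgesOf (α : MHG n r) (i : Fin n) :
    degM (edgesOf α) i = ∑ e : Sym (Fin n) r, α e * (e : Multiset (Fin n)).count i := by
  rw [edgesOf, degM_sum]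
  refine Finset.sum_congr rfl fun e _ => ?_
  simp [degM, Multiset.map_replicate, Multiset.sum_replicate]

lemma degM_barGraph (m : ℕ) (α : MHG n r) (i : Fin n) :
    degM (barGraph m α) i = (barEdge n m).count i + degM (edgesOf α) i := by
  simp [barGraph, degM_cons]

lemma edgesOf_add_deg (β γ : MHG n r) (i : Fin n) :
    degM (edgesOf (β + γ)) i = degM (edgesOf β) i + degM (edgesOf γ) i := by
  simp [degM_edgesOf, Pi.add_apply, add_mul, Finset.sum_add_distrib]

lemma edgeCount_add (β γ : MHG n r) : edgeCount (β + γ) = edgeCount β + edgeCount γ := by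
  simp [edgeCount, Finset.sum_add_distrib]

lemma edgeCount_lt_of_mem_erase {α β : MHG n r} (h : β ∈ (Finset.Iic α).erase α) :
    edgeCount β < edgeCount α := by
  rw [Finset.mem_erase, Finset.mem_Iic] at h
  obtain ⟨hne, hle⟩ := h
  have : ∃ e, β e ≠ α e := by
    by_contra hc
    push_neg at hc
    exact hne (funext hc)
  obtain ⟨e₀, he₀⟩ := this
  exact Finset.sum_lt_sum (fun e _ => hle e) ⟨e₀, Finset.mem_univ e₀,
    lt_of_le_of_ne (hle e₀) he₀⟩

lemma mem_edgesOf {α : MHG n r} {a : Multiset (Fin n)} :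
    a ∈ edgesOf α ↔ ∃ e : Sym (Fin n) r, 0 < α e ∧ (e : Multiset (Fin n)) = a := by
  simp only [edgesOf, Multiset.mem_sum, Finset.mem_univ, true_and, Multiset.mem_replicate]
  constructor
  · rintro ⟨e, hne, rfl⟩; exact ⟨e, Nat.pos_of_ne_zero hne, rfl⟩
  · rintro ⟨e, hpos, rfl⟩; exact ⟨e, Nat.pos_iff_ne_zero.mp hpos, rfl⟩

lemma degM_edgesOf_zero (γ : MHG n r) (i : Fin n)
    (h : ∀ e : Sym (Fin n) r, 0 < γ e → i ∉ (e : Multiset (Fin n))) :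
    degM (edgesOf γ) i = 0 := by
  rw [degM_edgesOf]
  refine Finset.sum_eq_zero fun e _ => ?_
  rcases Nat.eq_zero_or_pos (γ e) with h0 | hpos
  · simp [h0]
  · simp [Multiset.count_eq_zero_of_notMem (h e hpos)]

lemma mem_barEdge_iff {m : ℕ} {i : Fin n} : i ∈ barEdge n m ↔ (i : ℕ) < m := by
  simp [barEdge, Finset.mem_filter]

end Aux
section Aux2

variable {n r : ℕ}

lemma multiset_prod_map_pow (s : Multiset (Fin n)) (θ : Fin n → ℝ) :
    (s.map θ).prod = ∏ i : Fin n, θ i ^ s.count i := by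
  rw [Finset.prod_multiset_map_count]
  apply Finset.prod_subset (Finset.subset_univ _)
  intro i _ hi
  rw [Multiset.mem_toFinset] at hi
  simp [Multiset.count_eq_zero_of_notMem hi]

lemma prod_map_prod_eq (G : Multiset (Multiset (Fin n))) (θ : Fin n → ℝ) :
    ((G.map fun e => (e.map θ).prod).prod) = ∏ i : Fin n, θ i ^ degM G i := by
  induction G using Multiset.induction with
  | empty => simp [degM]
  | cons a G ih =>
      rw [Multiset.map_cons, Multiset.prod_cons, ih, multiset_prod_map_pow]
      rw [← Finset.prod_mul_distrib]
      refine Finset.prod_congr rfl fun i _ => ?_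
      rw [degM_cons, pow_add]

lemma map_edgesOf_prod (α : MHG n r) (f : Multiset (Fin n) → ℝ) :
    ((edgesOf α).map f).prod = ∏ e : Sym (Fin n) r, f (e : Multiset (Fin n)) ^ α e := by
  rw [edgesOf]
  induction (Finset.univ : Finset (Sym (Fin n) r)) using Finset.induction with
  | empty => simp
  | insert _ _ hx ih =>
      rw [Finset.sum_insert hx, Multiset.map_add, Multiset.prod_add, ih,
        Finset.prod_insert hx, Multiset.map_replicate, Multiset.prod_replicate]

lemma XPow_eq (lam : ℝ) (θ : Fin n → ℝ) (α : MHG n r) :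
    XPow lam θ α = lam ^ edgeCount α * ∏ i : Fin n, θ i ^ degM (edgesOf α) i := by
  rw [XPow]
  have : ∀ e : Sym (Fin n) r, (lam * ((e : Multiset (Fin n)).map θ).prod) ^ α e
      = lam ^ α e * (((e : Multiset (Fin n)).map θ).prod) ^ α e := fun e => mul_pow _ _ _
  rw [Finset.prod_congr rfl fun e _ => this e, Finset.prod_mul_distrib,
    Finset.prod_pow_eq_pow_sum]
  congr 1
  rw [← prod_map_prod_eq, map_edgesOf_prod]

lemma xEst_eq (m : ℕ) (hmn : m ≤ n) (θ : Fin n → ℝ) :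
    xEst m hmn θ = ∏ i : Fin n, θ i ^ (barEdge n m).count i := by
  rw [← multiset_prod_map_pow, xEst, barEdge]
  rw [show ((Finset.univ.filter fun i : Fin n => (i : ℕ) < m).val.map θ).prod
      = ∏ i ∈ Finset.univ.filter (fun i : Fin n => (i : ℕ) < m), θ i from rfl]
  refine Finset.prod_bij' (fun (i : Fin m) _ => Fin.castLE hmn i)
    (fun (i : Fin n) hi => ⟨(i : ℕ), by simpa using (Finset.mem_filter.mp hi).2⟩)
    ?_ ?_ ?_ ?_ ?_ <;> intros <;> simp_all [Fin.ext_iff]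

lemma xEst_mul_XPow (m : ℕ) (hmn : m ≤ n) (lam : ℝ) (θ : Fin n → ℝ) (α : MHG n r) :
    xEst m hmn θ * XPow lam θ α
      = lam ^ edgeCount α * ∏ i : Fin n, θ i ^ degM (barGraph m α) i := by
  rw [xEst_eq m hmn, XPow_eq, mul_left_comm]
  congr 1
  rw [← Finset.prod_mul_distrib]
  refine Finset.prod_congr rfl fun i _ => ?_
  rw [degM_barGraph, pow_add]

end Aux2
section Aux3

variable {n r : ℕ}

noncomputable def mom (π : Measure ℝ) (t : ℕ) : ℝ := ∫ y, y ^ t ∂π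

noncomputable def Mb (n r m : ℕ) (lam : ℝ) (π : Measure ℝ) (α : MHG n r) : ℝ :=
  lam ^ edgeCount α * ∏ i : Fin n, mom π (degM (barGraph m α) i)

noncomputable def Mp (n r : ℕ) (lam : ℝ) (π : Measure ℝ) (α : MHG n r) : ℝ :=
  lam ^ edgeCount α * ∏ i : Fin n, mom π (degM (edgesOf α) i)

lemma mom_zero (π : Measure ℝ) [IsProbabilityMeasure π] : mom π 0 = 1 := by
  simp [mom]

lemma mom_add_of_zero (π : Measure ℝ) [IsProbabilityMeasure π] {a b : ℕ}
    (h : a = 0 ∨ b = 0) : mom π (a + b) = mom π a * mom π b := by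
  rcases h with h | h <;> subst h <;> simp [mom_zero]

lemma integral_prod_pow (π : Measure ℝ) [IsProbabilityMeasure π] (D : Fin n → ℕ) :
    ∫ θ : Fin n → ℝ, ∏ i, θ i ^ D i ∂(Measure.pi fun _ => π) = ∏ i, mom π (D i) := by
  letI : MeasureSpace ℝ := ⟨π⟩
  haveI : SigmaFinite (volume : Measure ℝ) := inferInstanceAs (SigmaFinite π)
  have h1 : (Measure.pi fun _ : Fin n => π) = (volume : Measure (Fin n → ℝ)) :=
    (MeasureTheory.volume_pi).symm
  rw [h1]
  exact MeasureTheory.integral_fintype_prod_eq_prod (fun i (y : ℝ) => y ^ D i)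

lemma integral_XPow (π : Measure ℝ) [IsProbabilityMeasure π] (lam : ℝ) (γ : MHG n r) :
    ∫ θ : Fin n → ℝ, XPow lam θ γ ∂(Measure.pi fun _ => π) = Mp n r lam π γ := by
  simp only [XPow_eq]
  rw [MeasureTheory.integral_const_mul, integral_prod_pow, Mp]

lemma integral_xEst_XPow (π : Measure ℝ) [IsProbabilityMeasure π] (m : ℕ) (hmn : m ≤ n)
    (lam : ℝ) (α : MHG n r) :
    ∫ θ : Fin n → ℝ, xEst m hmn θ * XPow lam θ α ∂(Measure.pi fun _ => π)
      = Mb n r m lam π α := by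
  simp only [xEst_mul_XPow]
  rw [MeasureTheory.integral_const_mul, integral_prod_pow, Mb]

lemma Mp_zero (π : Measure ℝ) [IsProbabilityMeasure π] (lam : ℝ) :
    Mp n r lam π 0 = 1 := by
  have h : ∀ i : Fin n, degM (edgesOf (0 : MHG n r)) i = 0 := fun i => by
    simp [degM_edgesOf]
  simp [Mp, edgeCount, h, mom_zero]

end Aux3
section Aux4

variable {n r : ℕ}

/-- The part of α consisting of edges entirely outside S. -/
def cutOut (S : Finset (Fin n)) (α : MHG n r) : MHG n r :=
  fun e => if ∀ i ∈ (e : Multiset (Fin n)), i ∉ S then α e else 0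

lemma cutOut_le (S : Finset (Fin n)) (α : MHG n r) (e : Sym (Fin n) r) :
    cutOut S α e ≤ α e := by
  rw [cutOut]; split <;> omega

lemma cutOut_of_out {S : Finset (Fin n)} {α : MHG n r} {e : Sym (Fin n) r}
    (h : ∀ i ∈ (e : Multiset (Fin n)), i ∉ S) : cutOut S α e = α e := by
  rw [cutOut, if_pos h]

lemma cutOut_of_not_out {S : Finset (Fin n)} {α : MHG n r} {e : Sym (Fin n) r}
    (h : ¬ ∀ i ∈ (e : Multiset (Fin n)), i ∉ S) : cutOut S α e = 0 := by
  rw [cutOut, if_neg h]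

lemma cutOut_supp {S : Finset (Fin n)} {α : MHG n r} {e : Sym (Fin n) r}
    (h : 0 < cutOut S α e) : ∀ i ∈ (e : Multiset (Fin n)), i ∉ S := by
  by_cases hc : ∀ i ∈ (e : Multiset (Fin n)), i ∉ S
  · exact hc
  · rw [cutOut_of_not_out hc] at h; omega

variable (m : ℕ) (lam : ℝ) (π : Measure ℝ) [IsProbabilityMeasure π]

lemma Mp_split (S : Finset (Fin n)) (γ δ : MHG n r)
    (hγ : ∀ e : Sym (Fin n) r, 0 < γ e → ∀ i ∈ (e : Multiset (Fin n)), i ∈ S)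
    (hδ : ∀ e : Sym (Fin n) r, 0 < δ e → ∀ i ∈ (e : Multiset (Fin n)), i ∉ S) :
    Mp n r lam π (γ + δ) = Mp n r lam π γ * Mp n r lam π δ := by
  rw [Mp, Mp, Mp, edgeCount_add, pow_add]
  have key : ∀ i : Fin n, mom π (degM (edgesOf (γ + δ)) i)
      = mom π (degM (edgesOf γ) i) * mom π (degM (edgesOf δ) i) := by
    intro i
    rw [edgesOf_add_deg]
    apply mom_add_of_zero
    by_cases hiS : i ∈ S
    · exact Or.inr (degM_edgesOf_zero δ i fun e he hc => hδ e he i hc hiS)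
    · exact Or.inl (degM_edgesOf_zero γ i fun e he hc => hiS (hγ e he i hc))
  rw [Finset.prod_congr rfl fun i _ => key i, Finset.prod_mul_distrib]
  ring

lemma Mb_split (S : Finset (Fin n)) (hbar : ∀ i ∈ barEdge n m, i ∈ S) (γ δ : MHG n r)
    (hγ : ∀ e : Sym (Fin n) r, 0 < γ e → ∀ i ∈ (e : Multiset (Fin n)), i ∈ S)
    (hδ : ∀ e : Sym (Fin n) r, 0 < δ e → ∀ i ∈ (e : Multiset (Fin n)), i ∉ S) :
    Mb n r m lam π (γ + δ) = Mb n r m lam π γ * Mp n r lam π δ := by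
  rw [Mb, Mb, Mp, edgeCount_add, pow_add]
  have key : ∀ i : Fin n, mom π (degM (barGraph m (γ + δ)) i)
      = mom π (degM (barGraph m γ) i) * mom π (degM (edgesOf δ) i) := by
    intro i
    rw [degM_barGraph, degM_barGraph, edgesOf_add_deg, ← add_assoc]
    apply mom_add_of_zero
    by_cases hiS : i ∈ S
    · exact Or.inr (degM_edgesOf_zero δ i fun e he hc => hδ e he i hc hiS)
    · refine Or.inl ?_
      have h1 : (barEdge n m).count i = 0 :=
        Multiset.count_eq_zero_of_notMem fun hc => hiS (hbar i hc)
      have h2 : degM (edgesOf γ) i = 0 :=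
        degM_edgesOf_zero γ i fun e he hc => hiS (hγ e he i hc)
      omega
  rw [Finset.prod_congr rfl fun i _ => key i, Finset.prod_mul_distrib]
  ring

variable (κ : MHG n r → ℝ)
variable (hκ' : ∀ α : MHG n r, κ α = Mb n r m lam π α -
    ∑ β ∈ (Finset.Iic α).erase α,
      (mhgChoose α β : ℝ) * Mp n r lam π (α - β) * κ β)
variable (hm1 : mom π 1 = 0)

include hκ' hm1 in
lemma lemB : ∀ N : ℕ, ∀ α : MHG n r, edgeCount α < N →
    (∃ i : Fin n, degM (barGraph m α) i = 1) → κ α = 0 := by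
  intro N
  induction N with
  | zero => intro α h _; exact absurd h (Nat.not_lt_zero _)
  | succ N ih =>
    rintro α hlt ⟨i, hdeg⟩
    rw [hκ' α]
    have hMb : Mb n r m lam π α = 0 := by
      rw [Mb, Finset.prod_eq_zero (Finset.mem_univ i) (by rw [hdeg]; exact hm1), mul_zero]
    have hsum0 : ∑ β ∈ (Finset.Iic α).erase α,
        (mhgChoose α β : ℝ) * Mp n r lam π (α - β) * κ β = 0 := by
      refine Finset.sum_eq_zero fun β hβ => ?_
      have hle : β ≤ α := Finset.mem_Iic.mp (Finset.mem_erase.mp hβ).2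
      have hkey : degM (barGraph m β) i + degM (edgesOf (α - β)) i = 1 := by
        have hplus : β + (α - β) = α := funext fun e => by
          have hhe : β e ≤ α e := hle e
          simp only [Pi.add_apply, Pi.sub_apply]; omega
        have hadd := edgesOf_add_deg β (α - β) i
        rw [hplus] at hadd
        rw [degM_barGraph] at hdeg ⊢
        omega
      have h2 : degM (barGraph m β) i = 1 ∨ degM (edgesOf (α - β)) i = 1 := by omega
      rcases h2 with h2 | h2
      · have hκβ : κ β = 0 := ih β
          (lt_of_lt_of_le (edgeCount_lt_of_mem_erase hβ) (Nat.lt_succ_iff.mp hlt)) ⟨i, h2⟩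
        rw [hκβ, mul_zero]
      · have hMp : Mp n r lam π (α - β) = 0 := by
          rw [Mp, Finset.prod_eq_zero (Finset.mem_univ i) (by rw [h2]; exact hm1), mul_zero]
        rw [hMp]; ring
    rw [hMb, hsum0, sub_zero]

include hκ' in
lemma lemA (S : Finset (Fin n)) (hbar : ∀ i ∈ barEdge n m, i ∈ S) :
    ∀ N : ℕ, ∀ α : MHG n r, edgeCount α < N →
    (∀ e : Sym (Fin n) r, 0 < α e →
      (∀ i ∈ (e : Multiset (Fin n)), i ∈ S) ∨ (∀ i ∈ (e : Multiset (Fin n)), i ∉ S)) →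
    (∃ e : Sym (Fin n) r, 0 < α e ∧ ∀ i ∈ (e : Multiset (Fin n)), i ∉ S) →
    κ α = 0 := by
  intro N
  induction N with
  | zero => intro α h _ _; exact absurd h (Nat.not_lt_zero _)
  | succ N ih =>
    rintro α hlt hsplit ⟨e₀, he₀pos, he₀out⟩
    classical
    obtain ⟨α₂, hα₂def⟩ : ∃ x : MHG n r, x = cutOut S α := ⟨_, rfl⟩
    obtain ⟨α₁, hα₁def⟩ : ∃ x : MHG n r, x = α - α₂ := ⟨_, rfl⟩
    have hα₁e : ∀ e, α₁ e = α e - α₂ e := fun e => by rw [hα₁def]; rfl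
    have hle2 : ∀ e, α₂ e ≤ α e := fun e => by rw [hα₂def]; exact cutOut_le S α e
    have h12 : ∀ e, α₁ e + α₂ e = α e := fun e => by
      have := hle2 e; rw [hα₁e]; omega
    have hsup2 : ∀ e : Sym (Fin n) r, 0 < α₂ e → ∀ i ∈ (e : Multiset (Fin n)), i ∉ S :=
      fun e he => cutOut_supp (hα₂def ▸ he)
    have hsup1 : ∀ e : Sym (Fin n) r, 0 < α₁ e → ∀ i ∈ (e : Multiset (Fin n)), i ∈ S := by
      intro e he
      have hpos : 0 < α e := by have := hα₁e e; have := hle2 e; omega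
      by_cases h : ∀ i ∈ (e : Multiset (Fin n)), i ∉ S
      · exfalso
        have h2 : α₂ e = α e := by rw [hα₂def]; exact cutOut_of_out h
        have h3 := hα₁e e
        omega
      · rcases hsplit e hpos with hin | hout
        · exact hin
        · exact absurd hout h
    have h2e0 : α₂ e₀ = α e₀ := by rw [hα₂def]; exact cutOut_of_out he₀out
    have h1e0 : α₁ e₀ = 0 := by rw [hα₁e, h2e0]; omega
    have hne : α₁ ≠ α := by
      intro hc
      have := congrFun hc e₀
      rw [h1e0] at this
      omega
    have h1le : α₁ ≤ α := fun e => by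
      have h := hα₁e e
      exact h ▸ Nat.sub_le _ _
    rw [hκ' α]
    have hMbα : Mb n r m lam π α = Mb n r m lam π α₁ * Mp n r lam π α₂ := by
      have hdec : α = α₁ + α₂ := funext fun e => (h12 e).symm
      rw [hdec]
      exact Mb_split m lam π S hbar α₁ α₂ hsup1 hsup2
    have hsum : ∑ β ∈ (Finset.Iic α).erase α,
        (mhgChoose α β : ℝ) * Mp n r lam π (α - β) * κ β
        = Mp n r lam π α₂ * Mb n r m lam π α₁ := by
      rw [← Finset.sum_filter_add_sum_filter_not ((Finset.Iic α).erase α) (fun β => β ≤ α₁)]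
      have hz : ∑ β ∈ ((Finset.Iic α).erase α).filter (fun β => ¬ β ≤ α₁),
          (mhgChoose α β : ℝ) * Mp n r lam π (α - β) * κ β = 0 := by
        refine Finset.sum_eq_zero fun β hβ => ?_
        rw [Finset.mem_filter] at hβ
        obtain ⟨hβe, hnle⟩ := hβ
        have hβle : β ≤ α := Finset.mem_Iic.mp (Finset.mem_erase.mp hβe).2
        have hex : ∃ e₁, α₁ e₁ < β e₁ := by
          by_contra hc; push_neg at hc; exact hnle hc
        obtain ⟨e₁, he₁⟩ := hex
        have hβ1pos : 0 < β e₁ := lt_of_le_of_lt (Nat.zero_le _) he₁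
        have hα2pos : 0 < α₂ e₁ := by
          have h1 := h12 e₁
          have h2 : β e₁ ≤ α e₁ := hβle e₁
          omega
        have hκβ : κ β = 0 := ih β
          (lt_of_lt_of_le (edgeCount_lt_of_mem_erase hβe) (Nat.lt_succ_iff.mp hlt))
          (fun e he => hsplit e (lt_of_lt_of_le he (hβle e)))
          ⟨e₁, hβ1pos, hsup2 e₁ hα2pos⟩
        rw [hκβ, mul_zero]
      rw [hz, add_zero]
      have hfeq : ((Finset.Iic α).erase α).filter (fun β => β ≤ α₁) = Finset.Iic α₁ := by
        ext β
        simp only [Finset.mem_filter, Finset.mem_erase, Finset.mem_Iic]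
        constructor
        · rintro ⟨_, h⟩; exact h
        · intro h
          refine ⟨⟨?_, le_trans h h1le⟩, h⟩
          rintro rfl
          exact hne (le_antisymm h1le h)
      rw [hfeq]
      have hterm : ∀ β ∈ Finset.Iic α₁,
          (mhgChoose α β : ℝ) * Mp n r lam π (α - β) * κ β
          = Mp n r lam π α₂ * ((mhgChoose α₁ β : ℝ) * Mp n r lam π (α₁ - β) * κ β) := by
        intro β hβ
        have hβ1 : β ≤ α₁ := Finset.mem_Iic.mp hβ
        have hch : mhgChoose α β = mhgChoose α₁ β := by
          rw [mhgChoose, mhgChoose]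
          refine Finset.prod_congr rfl fun e _ => ?_
          by_cases h : ∀ i ∈ (e : Multiset (Fin n)), i ∉ S
          · have h2 : α₂ e = α e := by rw [hα₂def]; exact cutOut_of_out h
            have h1 : α₁ e = 0 := by have := hα₁e e; omega
            have hb : β e = 0 := by have h3 : β e ≤ α₁ e := hβ1 e; omega
            simp [h1, hb]
          · have h2 : α₂ e = 0 := by rw [hα₂def]; exact cutOut_of_not_out h
            have h1 : α₁ e = α e := by have := hα₁e e; omega
            rw [h1]
        have hmp : Mp n r lam π (α - β) = Mp n r lam π (α₁ - β) * Mp n r lam π α₂ := by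
          have hd : α - β = (α₁ - β) + α₂ := funext fun e => by
            have h1 := h12 e
            have h2 : β e ≤ α₁ e := hβ1 e
            simp only [Pi.sub_apply, Pi.add_apply]
            omega
          rw [hd]
          refine Mp_split lam π S (α₁ - β) α₂ (fun e he => ?_) hsup2
          have hpos1 : 0 < α₁ e := by
            have h1 : (α₁ - β) e = α₁ e - β e := rfl
            omega
          exact hsup1 e hpos1
        rw [hch, hmp]; ring
      rw [Finset.sum_congr rfl hterm, ← Finset.mul_sum]
      congr 1
      have hmem : α₁ ∈ Finset.Iic α₁ := Finset.mem_Iic.mpr le_rfl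
      rw [← Finset.sum_erase_add _ _ hmem]
      have hCself : (mhgChoose α₁ α₁ : ℝ) = 1 := by
        simp [mhgChoose, Nat.choose_self]
      have hsub : α₁ - α₁ = (0 : MHG n r) := by funext e; simp
      rw [hsub, Mp_zero, hCself, one_mul, one_mul]
      have := hκ' α₁
      linarith
    rw [hMbα, hsum]
    ring
  
end Aux4
section Aux5

variable {n : ℕ}

/-- Two vertices are related if they lie in a common edge of G. -/
def EdgeRel (G : Multiset (Multiset (Fin n))) (u v : Fin n) : Prop :=
  ∃ e ∈ G, u ∈ e ∧ v ∈ e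

lemma rel_symm (G : Multiset (Multiset (Fin n))) : Symmetric (EdgeRel G) := by
  rintro a b ⟨e, h1, h2, h3⟩; exact ⟨e, h1, h3, h2⟩

lemma path_of_rtg (G : Multiset (Multiset (Fin n))) {u v : Fin n}
    (h : Relation.ReflTransGen (EdgeRel G) u v) (hu : ∃ e ∈ G, u ∈ e) :
    ∃ (p : ℕ) (c : Fin (p + 1) → Multiset (Fin n)),
      (∀ j, c j ∈ G) ∧ u ∈ c 0 ∧ v ∈ c (Fin.last p) ∧
      ∀ j : Fin p, ∃ w : Fin n, w ∈ c j.castSucc ∧ w ∈ c j.succ := by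
  induction h with
  | refl =>
      obtain ⟨e, he, hue⟩ := hu
      exact ⟨0, fun _ => e, fun _ => he, hue, hue, fun j => j.elim0⟩
  | @tail x y hux hxy ih =>
      obtain ⟨p, c, h1, h2, h3, h4⟩ := ih
      obtain ⟨e, he, hxe, hye⟩ := hxy
      refine ⟨p + 1, Fin.snoc c e, ?_, ?_, ?_, ?_⟩
      · intro j
        refine Fin.lastCases ?_ ?_ j
        · rw [Fin.snoc_last]; exact he
        · intro j'; rw [Fin.snoc_castSucc]; exact h1 j'
      · have h0 : (0 : Fin (p + 2)) = Fin.castSucc 0 := rfl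
        rw [h0, Fin.snoc_castSucc]; exact h2
      · rw [Fin.snoc_last]; exact hye
      · intro j
        refine Fin.lastCases ?_ ?_ j
        · refine ⟨x, ?_, ?_⟩
          · rw [Fin.snoc_castSucc]; exact h3
          · rw [Fin.succ_last, Fin.snoc_last]; exact hxe
        · intro j'
          obtain ⟨w, hw1, hw2⟩ := h4 j'
          refine ⟨w, ?_, ?_⟩
          · rw [Fin.snoc_castSucc]; exact hw1
          · rw [Fin.succ_castSucc, Fin.snoc_castSucc]; exact hw2

end Aux5

/-- Lemma 6.1: vanishing of cumulants for non-good graphs in tensor PCA.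
θ has i.i.d. entries from a prior π with mean 0 and all moments finite, X = λθ^{⊗r},
x = ∏_{i=1}^m θ_i, and the joint cumulants κ_α are defined by the recursion
κ_α = E[x·X^α] − Σ_{0 ≤ β < α} binom(α,β)·E[X^{α−β}]·κ_β.  Then κ_α = 0 whenever
α is not good. -/
theorem cumulants_vanish_for_non_good (n r m : ℕ) (hr : 2 ≤ r) (hm : 2 ≤ m)
    (hmn : m ≤ n) (lam : ℝ) (hlam : 0 ≤ lam)
    (π : Measure ℝ) [IsProbabilityMeasure π]
    (hmean : (∫ y, y ∂π) = 0)
    (hmom : ∀ t : ℕ, Integrable (fun y : ℝ => |y| ^ t) π)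
    (κ : MHG n r → ℝ)
    (hκ : ∀ α : MHG n r, κ α =
      (∫ θ, xEst m hmn θ * XPow lam θ α ∂(Measure.pi fun _ : Fin n => π)) -
        ∑ β ∈ (Finset.Iic α).erase α,
          (mhgChoose α β : ℝ) *
            (∫ θ, XPow lam θ (α - β) ∂(Measure.pi fun _ : Fin n => π)) * κ β) :
    ∀ α : MHG n r, ¬ GoodMHG m α → κ α = 0 := by
  classical
  have hm1 : mom π 1 = 0 := by
    rw [mom]
    simpa using hmean
  have hκ' : ∀ α : MHG n r, κ α = Mb n r m lam π α -
      ∑ β ∈ (Finset.Iic α).erase α,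
        (mhgChoose α β : ℝ) * Mp n r lam π (α - β) * κ β := by
    intro α
    rw [hκ α, integral_xEst_XPow]
    congr 1
    refine Finset.sum_congr rfl fun β _ => ?_
    rw [integral_XPow]
  intro α hng
  by_cases hdeg : ∃ i : Fin n, degM (barGraph m α) i = 1
  · exact lemB m lam π κ hκ' hm1 (edgeCount α + 1) α (Nat.lt_succ_self _) hdeg
  · push_neg at hdeg
    have hnc : ¬ MHConnected (barGraph m α) := by
      intro hc
      exact hng (Or.inr ⟨hc, fun i hi => by have := hdeg i; omega⟩)
    have h0n : 0 < n := by omega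
    set i0 : Fin n := ⟨0, h0n⟩ with hi0
    set G := barGraph m α with hG
    have hi0bar : i0 ∈ barEdge n m := mem_barEdge_iff.mpr (by simp [hi0]; omega)
    have hbarG : barEdge n m ∈ G := Multiset.mem_cons_self _ _
    set S : Finset (Fin n) :=
      Finset.univ.filter (fun w => Relation.ReflTransGen (EdgeRel G) i0 w) with hS
    have hmemS : ∀ w : Fin n, w ∈ S ↔ Relation.ReflTransGen (EdgeRel G) i0 w := by
      intro w; simp [hS]
    have hbarS : ∀ i ∈ barEdge n m, i ∈ S := by
      intro i hi
      exact (hmemS i).mpr (Relation.ReflTransGen.single ⟨barEdge n m, hbarG, hi0bar, hi⟩)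
    have hedgeG : ∀ e : Sym (Fin n) r, 0 < α e → (e : Multiset (Fin n)) ∈ G :=
      fun e he => Multiset.mem_cons_of_mem (mem_edgesOf.mpr ⟨e, he, rfl⟩)
    have hsplitS : ∀ e : Sym (Fin n) r, 0 < α e →
        (∀ i ∈ (e : Multiset (Fin n)), i ∈ S) ∨ (∀ i ∈ (e : Multiset (Fin n)), i ∉ S) := by
      intro e he
      by_cases hex : ∃ i ∈ (e : Multiset (Fin n)), i ∈ S
      · left
        obtain ⟨i, hie, hiS⟩ := hex
        intro j hje
        exact (hmemS j).mpr (((hmemS i).mp hiS).tail ⟨(e : Multiset (Fin n)), hedgeG e he, hie, hje⟩)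
      · right
        push_neg at hex
        exact hex
    have hout : ∃ e : Sym (Fin n) r, 0 < α e ∧ ∀ i ∈ (e : Multiset (Fin n)), i ∉ S := by
      by_contra hcon
      push_neg at hcon
      have hall : ∀ e : Sym (Fin n) r, 0 < α e → ∀ i ∈ (e : Multiset (Fin n)), i ∈ S := by
        intro e he
        refine (hsplitS e he).resolve_right fun h => ?_
        obtain ⟨i, hie, hiS⟩ := hcon e he
        exact h i hie hiS
      apply hnc
      intro u v hu hv
      have hreach : ∀ w : Fin n, (∃ e ∈ G, w ∈ e) → Relation.ReflTransGen (EdgeRel G) i0 w := by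
        rintro w ⟨e, heG, hwe⟩
        rcases Multiset.mem_cons.mp heG with he | he
        · exact (hmemS w).mp (hbarS w (he ▸ hwe))
        · obtain ⟨e', hpos, heq⟩ := mem_edgesOf.mp he
          exact (hmemS w).mp (hall e' hpos w (heq.symm ▸ hwe))
      have hpath : Relation.ReflTransGen (EdgeRel G) u v :=
        ((@Std.Symm.symm _ _ (@Relation.ReflTransGen.stdSymm _ _ ⟨fun a b h => rel_symm G h⟩) _ _ (hreach u hu))).trans (hreach v hv)
      exact path_of_rtg G hpath hu
    exact lemA m lam π κ hκ' S hbarS (edgeCount α + 1) α (Nat.lt_succ_self _) hsplitS hout
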